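/- arXiv:1602.02808 — 2 statements merged into one kernel-verified Lean document; each statement's English description precedes it below -/
import Mathlib

section
/- Let 1 < q < 2 and α > 0. Then there is no function G : ℝⁿ → ℝ satisfying 2G((ξ+η)/2) + α|ξ−η|^q ≤ G(ξ) + G(η) for all ξ, η ∈ ℝⁿ. -/
open Set

noncomputable section

/-- **Remark.** For `1 < q < 2` and `α > 0`, no finite-valued function `G : ℝⁿ → ℝ` (`n ≥ 1`)
can be uniformly convex of power `q`-type, i.e. satisfy
`2G((ξ+η)/2) + α|ξ−η|^q ≤ G(ξ) + G(η)` for all `ξ, η ∈ ℝⁿ`. -/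
theorem no_uniformly_convex_of_power_lt_two {n : ℕ} (hn : 0 < n) (q α : ℝ)
    (hq1 : 1 < q) (hq2 : q < 2) (hα : 0 < α) :
    ¬ ∃ G : EuclideanSpace ℝ (Fin n) → ℝ,
        ∀ ξ η : EuclideanSpace ℝ (Fin n),
          2 * G ((2:ℝ)⁻¹ • (ξ + η)) + α * ‖ξ - η‖ ^ q ≤ G ξ + G η := by
  rintro ⟨G, hG⟩
  have h2q : (0:ℝ) < 2 ^ q := Real.rpow_pos_of_pos two_pos q
  have key : ∀ k : ℕ, ∀ ξ v : EuclideanSpace ℝ (Fin n),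
      (4 / 2 ^ q) ^ k * (α * (2 * ‖v‖) ^ q) ≤ G (ξ + v) + G (ξ - v) - 2 * G ξ := by
    intro k
    induction k with
    | zero =>
      intro ξ v
      have h := hG (ξ + v) (ξ - v)
      have e1 : (2:ℝ)⁻¹ • ((ξ + v) + (ξ - v)) = ξ := by
        rw [show (ξ + v) + (ξ - v) = (2:ℝ) • ξ by module, smul_smul]
        norm_num
      have e2 : (ξ + v) - (ξ - v) = (2:ℝ) • v := by module
      rw [e1, e2, norm_smul] at h
      simp only [Real.norm_ofNat] at h
      rw [pow_zero, one_mul]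
      linarith
    | succ k ih =>
      intro ξ v
      have I1 := ih (ξ + (2:ℝ)⁻¹ • v) ((2:ℝ)⁻¹ • v)
      have I2 := ih (ξ - (2:ℝ)⁻¹ • v) ((2:ℝ)⁻¹ • v)
      have I3 := ih ξ ((2:ℝ)⁻¹ • v)
      have e1 : ξ + (2:ℝ)⁻¹ • v + (2:ℝ)⁻¹ • v = ξ + v := by module
      have e2 : ξ + (2:ℝ)⁻¹ • v - (2:ℝ)⁻¹ • v = ξ := by module
      have e3 : ξ - (2:ℝ)⁻¹ • v + (2:ℝ)⁻¹ • v = ξ := by module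
      have e4 : ξ - (2:ℝ)⁻¹ • v - (2:ℝ)⁻¹ • v = ξ - v := by module
      have en : 2 * ‖(2:ℝ)⁻¹ • v‖ = ‖v‖ := by
        rw [norm_smul, Real.norm_eq_abs, abs_of_pos (by norm_num : (0:ℝ) < 2⁻¹)]; ring
      rw [e1, e2, en] at I1
      rw [e3, e4, en] at I2
      rw [en] at I3
      have hm : (2 * ‖v‖) ^ q = 2 ^ q * ‖v‖ ^ q :=
        Real.mul_rpow (by norm_num) (norm_nonneg v)
      have hAB : (4 / 2 ^ q) ^ (k + 1) * (α * (2 * ‖v‖) ^ q)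
          = 4 * ((4 / 2 ^ q) ^ k * (α * ‖v‖ ^ q)) := by
        rw [hm, pow_succ]
        field_simp
      rw [hAB]
      linarith
  -- unit vector
  set v : EuclideanSpace ℝ (Fin n) := EuclideanSpace.single ⟨0, hn⟩ (1:ℝ) with hv
  have hvn : ‖v‖ = 1 := by simp [hv]
  have hC : ∀ k : ℕ, (4 / 2 ^ q) ^ k * (α * 2 ^ q) ≤ G v + G (-v) - 2 * G 0 := by
    intro k
    have h := key k 0 v
    rw [hvn] at h
    simpa using h
  have h4 : (2:ℝ) ^ q < 4 := by
    calc (2:ℝ) ^ q < 2 ^ (2:ℝ) :=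
          (Real.rpow_lt_rpow_left_iff (by norm_num : (1:ℝ) < 2)).mpr hq2
      _ = 4 := by
          rw [show ((2:ℝ):ℝ) ^ (2:ℝ) = (2:ℝ) ^ ((2:ℕ):ℝ) by norm_num, Real.rpow_natCast]
          norm_num
  have hr : (1:ℝ) < 4 / (2:ℝ) ^ q := (one_lt_div h2q).mpr h4
  obtain ⟨k, hk⟩ := pow_unbounded_of_one_lt ((G v + G (-v) - 2 * G 0) / (α * 2 ^ q)) hr
  have hpos : 0 < α * 2 ^ q := by positivity
  have := hC k
  rw [div_lt_iff₀ hpos] at hk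
  linarith
end
end

section
/- Let q ≥ 2, M, M₁ > 0, and let a_0 ≤ a_1 ≤ … ≤ a_N be a non-decreasing finite sequence of positive real numbers with a_m ≤ M₁ for all 0 ≤ m ≤ N and a_m ≤ M (a_{m+1} − a_m)^{1/q} for all 0 ≤ m ≤ N−1. Then there is a constant C₁ > 0 depending only on q, M and M₁ such that a_0^{1−q} − a_N^{1−q} ≥ C₁ N, and consequently a_0 ≤ (C₁ N)^{−1/(q−1)}. -/
noncomputable section

open Real Finset

/-- Convexity-type estimate: `(q-1)(b-a) b^{-q} ≤ a^{1-q} - b^{1-q}`. -/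
lemma convex_step (q : ℝ) (hq : 2 ≤ q) (a b : ℝ) (ha : 0 < a) (hab : a ≤ b) :
    (q - 1) * (b - a) * b ^ (-q) ≤ a ^ (1 - q) - b ^ (1 - q) := by
  have hb : 0 < b := lt_of_lt_of_le ha hab
  have hs : (0:ℝ) ≤ (b - a) / a := div_nonneg (by linarith) ha.le
  -- Bernoulli: (b/a)^q ≥ 1 + q*(b-a)/a
  have hbern : 1 + q * ((b - a) / a) ≤ (1 + (b - a) / a) ^ q :=
    one_add_mul_self_le_rpow_one_add (by linarith) (by linarith)
  have h1 : 1 + (b - a) / a = b / a := by field_simp; ring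
  rw [h1] at hbern
  -- so a + q*(b-a) ≤ a^(1-q) * b^q
  have h2 : a + q * (b - a) ≤ a ^ (1 - q) * b ^ q := by
    have h3 : a * (1 + q * ((b - a) / a)) ≤ a * ((b / a) ^ q) :=
      mul_le_mul_of_nonneg_left hbern ha.le
    have e1 : a * (1 + q * ((b - a) / a)) = a + q * (b - a) := by field_simp
    have e2 : a * ((b / a) ^ q) = a ^ (1 - q) * b ^ q := by
      rw [Real.div_rpow hb.le ha.le, Real.rpow_sub ha, Real.rpow_one]
      field_simp
    rw [e1, e2] at h3
    exact h3
  -- multiply by b^(-q)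
  have hbq : (0:ℝ) < b ^ q := Real.rpow_pos_of_pos hb q
  have h4 : (a + q * (b - a)) * b ^ (-q) ≤ a ^ (1 - q) := by
    rw [Real.rpow_neg hb.le]
    rw [mul_inv_le_iff₀ hbq]
    exact h2
  have e3 : (a + q * (b - a)) * b ^ (-q) = b ^ (1 - q) + (q - 1) * (b - a) * b ^ (-q) := by
    have : b ^ (1 - q) = b * b ^ (-q) := by
      rw [show (1 - q) = 1 + (-q) by ring, Real.rpow_add hb, Real.rpow_one]
    rw [this]; ring
  rw [e3] at h4
  linarith

/-- One-step inequality. -/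
lemma step_ineq (q M M₁ : ℝ) (hq : 2 ≤ q) (hM : 0 < M) (hM₁ : 0 < M₁)
    (a b : ℝ) (ha : 0 < a) (hab : a ≤ b) (haM : a ≤ M₁)
    (h : a ≤ M * (b - a) ^ (1 / q)) :
    min ((1 - 2 ^ (1 - q)) * M₁ ^ (1 - q)) ((q - 1) * (2 * M) ^ (-q)) ≤
      a ^ (1 - q) - b ^ (1 - q) := by
  have hb : 0 < b := lt_of_lt_of_le ha hab
  have hq0 : (0:ℝ) < q := by linarith
  have hba : 0 ≤ b - a := by linarith
  -- key: (a/M)^q ≤ b - a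
  have hkey : (a / M) ^ q ≤ b - a := by
    have h1 : a / M ≤ (b - a) ^ (1 / q) := (div_le_iff₀' hM).2 h
    have h2 : (a / M) ^ q ≤ ((b - a) ^ (1 / q)) ^ q :=
      Real.rpow_le_rpow (by positivity) h1 hq0.le
    rwa [← Real.rpow_mul hba, one_div, inv_mul_cancel₀ hq0.ne', Real.rpow_one] at h2
  rcases le_total b (2 * a) with hcase | hcase
  · -- b ≤ 2a : use convex_step
    refine le_trans (min_le_right _ _) ?_
    have hconv := convex_step q hq a b ha hab
    have h5 : (2 * M) ^ (-q) ≤ (b - a) * b ^ (-q) := by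
      have hb2 : b ^ (-q) ≥ (2 * a) ^ (-q) :=
        Real.rpow_le_rpow_of_nonpos hb hcase (by linarith)
      have h6 : (a / M) ^ q * (2 * a) ^ (-q) ≤ (b - a) * b ^ (-q) := by
        apply mul_le_mul hkey hb2 (by positivity) hba
      refine le_trans (le_of_eq ?_) h6
      rw [Real.rpow_neg (by positivity), Real.rpow_neg (by positivity),
        ← Real.inv_rpow (by positivity), ← Real.inv_rpow (by positivity),
        ← Real.mul_rpow (by positivity) (by positivity)]
      congr 1
      field_simp
    calc (q - 1) * (2 * M) ^ (-q) ≤ (q - 1) * ((b - a) * b ^ (-q)) := by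
          apply mul_le_mul_of_nonneg_left h5 (by linarith)
      _ = (q - 1) * (b - a) * b ^ (-q) := by ring
      _ ≤ a ^ (1 - q) - b ^ (1 - q) := hconv
  · -- 2a ≤ b
    refine le_trans (min_le_left _ _) ?_
    have hbq : b ^ (1 - q) ≤ 2 ^ (1 - q) * a ^ (1 - q) := by
      rw [← Real.mul_rpow (by norm_num) ha.le]
      exact Real.rpow_le_rpow_of_nonpos (by positivity) hcase (by linarith)
    have h2q : (2:ℝ) ^ (1 - q) ≤ 2 ^ (-1 : ℝ) :=
      Real.rpow_le_rpow_of_exponent_le (by norm_num) (by linarith)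
    have h2q' : (2:ℝ) ^ (1 - q) < 1 := by
      refine lt_of_le_of_lt h2q ?_
      rw [Real.rpow_neg_one]; norm_num
    have hM₁q : M₁ ^ (1 - q) ≤ a ^ (1 - q) :=
      Real.rpow_le_rpow_of_nonpos ha haM (by linarith)
    calc (1 - 2 ^ (1 - q)) * M₁ ^ (1 - q) ≤ (1 - 2 ^ (1 - q)) * a ^ (1 - q) := by
          apply mul_le_mul_of_nonneg_left hM₁q (by linarith)
      _ = a ^ (1 - q) - 2 ^ (1 - q) * a ^ (1 - q) := by ring
      _ ≤ a ^ (1 - q) - b ^ (1 - q) := by linarith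

/-- **Lemma (discrete iteration).** Let `q ≥ 2` and `M, M₁ > 0`. There is `C₁ > 0`,
depending only on `q, M, M₁`, such that for every non-decreasing finite sequence
`0 < a_0 ≤ … ≤ a_N ≤ M₁` satisfying `a_m ≤ M (a_{m+1} − a_m)^(1/q)` one has
`a_0^{1−q} − a_N^{1−q} ≥ C₁ N`, and consequently `a_0 ≤ (C₁ N)^{−1/(q−1)}`. -/
theorem discrete_iteration_lemma (q M M₁ : ℝ) (hq : 2 ≤ q) (hM : 0 < M) (hM₁ : 0 < M₁) :
    ∃ C₁ > 0, ∀ (N : ℕ) (a : ℕ → ℝ),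
      (∀ m ≤ N, 0 < a m) →
      (∀ m < N, a m ≤ a (m + 1)) →
      (∀ m ≤ N, a m ≤ M₁) →
      (∀ m < N, a m ≤ M * (a (m + 1) - a m) ^ (1 / q)) →
      C₁ * N ≤ a 0 ^ (1 - q) - a N ^ (1 - q) ∧
      (0 < N → a 0 ≤ (C₁ * N) ^ (-(1 / (q - 1)))) := by
  set C₁ := min ((1 - 2 ^ (1 - q)) * M₁ ^ (1 - q)) ((q - 1) * (2 * M) ^ (-q)) with hC₁def
  have h2q' : (2:ℝ) ^ (1 - q) < 1 := by
    refine lt_of_le_of_lt (Real.rpow_le_rpow_of_exponent_le (by norm_num)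
      (show (1 : ℝ) - q ≤ -1 by linarith)) ?_
    rw [Real.rpow_neg_one]; norm_num
  have hC₁pos : 0 < C₁ := by
    apply lt_min
    · have : (0:ℝ) < M₁ ^ (1 - q) := Real.rpow_pos_of_pos hM₁ _
      nlinarith
    · have : (0:ℝ) < (2 * M) ^ (-q) := Real.rpow_pos_of_pos (by positivity) _
      nlinarith
  refine ⟨C₁, hC₁pos, fun N a hpos hmono hbd hrec => ?_⟩
  have hmain : C₁ * N ≤ a 0 ^ (1 - q) - a N ^ (1 - q) := by
    have htel : ∑ i ∈ Finset.range N, (a i ^ (1 - q) - a (i + 1) ^ (1 - q)) =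
        a 0 ^ (1 - q) - a N ^ (1 - q) :=
      Finset.sum_range_sub' (fun i => a i ^ (1 - q)) N
    rw [← htel]
    have hsum : ∑ i ∈ Finset.range N, C₁ ≤
        ∑ i ∈ Finset.range N, (a i ^ (1 - q) - a (i + 1) ^ (1 - q)) := by
      apply Finset.sum_le_sum
      intro i hi
      rw [Finset.mem_range] at hi
      exact step_ineq q M M₁ hq hM hM₁ (a i) (a (i + 1)) (hpos i hi.le)
        (hmono i hi) (hbd i hi.le) (hrec i hi)
    simpa [mul_comm] using hsum
  refine ⟨hmain, fun hN => ?_⟩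
  have ha0 : 0 < a 0 := hpos 0 (Nat.zero_le N)
  have haN : 0 < a N ^ (1 - q) := Real.rpow_pos_of_pos (hpos N le_rfl) _
  have h1 : C₁ * N ≤ a 0 ^ (1 - q) := by linarith
  have hCN : 0 < C₁ * N := by positivity
  set r := 1 / (q - 1) with hr
  have hrpos : 0 < r := by
    rw [hr]; exact div_pos one_pos (by linarith)
  have h2 : (C₁ * N) ^ r ≤ (a 0 ^ (1 - q)) ^ r :=
    Real.rpow_le_rpow hCN.le h1 hrpos.le
  have h3 : (a 0 ^ (1 - q)) ^ r = (a 0)⁻¹ := by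
    rw [← Real.rpow_mul ha0.le, hr]
    rw [show (1 - q) * (1 / (q - 1)) = -1 by
      rw [mul_one_div, div_eq_iff (show q - 1 ≠ 0 by intro h; nlinarith)]; ring]
    exact Real.rpow_neg_one _
  rw [h3] at h2
  have h4 : a 0 ≤ ((C₁ * N) ^ r)⁻¹ := by
    have hx : 0 < (C₁ * N) ^ r := Real.rpow_pos_of_pos hCN r
    calc a 0 = ((a 0)⁻¹)⁻¹ := (inv_inv _).symm
      _ ≤ ((C₁ * N) ^ r)⁻¹ := by
          apply inv_anti₀ hx h2
  rwa [← Real.rpow_neg hCN.le] at h4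
end
end
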